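/- For a Euclidean distance matrix D of n points in R^d with n > d+2 and σ > 0, the second largest eigenvalue of D − σ(11^T − I) equals σ. Consequently D = C + λ_2(C)·J where C = D − σ_D J is the component of D orthogonal to J and λ_2 denotes the second largest eigenvalue. -/

import Mathlib

open Matrix BigOperators

/-- The second largest value of a finite family of reals: the largest `μ` that is
dominated by at least two of the values. -/
noncomputable def secondLargest {n : ℕ} (f : Fin n → ℝ) : ℝ :=
  sSup {μ : ℝ | ∃ i j : Fin n, i ≠ j ∧ μ ≤ f i ∧ μ ≤ f j}

section EDMAux
open Module
open scoped RealInnerProductSpace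

section Spectral
variable {n : ℕ} {H : Matrix (Fin n) (Fin n) ℝ}

lemma inner_eq_dot (u w : EuclideanSpace ℝ (Fin n)) : ⟪u, w⟫ = u ⬝ᵥ w := by
  simp [PiLp.inner_apply, RCLike.inner_apply, conj_trivial, dotProduct, mul_comm]

lemma dot_mulVec_symm (hH : H.IsHermitian) (u w : Fin n → ℝ) :
    u ⬝ᵥ (H *ᵥ w) = (H *ᵥ u) ⬝ᵥ w := by
  have hsym : Hᵀ = H := by ext i j; simpa using congrFun (congrFun hH i) j
  rw [Matrix.dotProduct_mulVec, ← Matrix.mulVec_transpose, hsym]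

lemma inner_basis_mulVec (hH : H.IsHermitian) (z : EuclideanSpace ℝ (Fin n)) (i : Fin n) :
    ⟪hH.eigenvectorBasis i, (WithLp.toLp 2 (H *ᵥ z) : EuclideanSpace ℝ (Fin n))⟫
      = hH.eigenvalues i * ⟪hH.eigenvectorBasis i, z⟫ := by
  rw [inner_eq_dot, WithLp.ofLp_toLp, dot_mulVec_symm hH, inner_eq_dot]
  have h : H *ᵥ (hH.eigenvectorBasis i : Fin n → ℝ)
      = hH.eigenvalues i • (hH.eigenvectorBasis i : Fin n → ℝ) := hH.mulVec_eigenvectorBasis i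
  rw [h, smul_dotProduct]; rfl

lemma quad_expansion (hH : H.IsHermitian) (z : EuclideanSpace ℝ (Fin n)) :
    z ⬝ᵥ (H *ᵥ z) = ∑ i, hH.eigenvalues i * ⟪hH.eigenvectorBasis i, z⟫ ^ 2 := by
  rw [← inner_eq_dot]
  rw [← (hH.eigenvectorBasis).sum_inner_mul_inner z (WithLp.toLp 2 (H *ᵥ z) : EuclideanSpace ℝ (Fin n))]
  refine Finset.sum_congr rfl fun i _ => ?_
  rw [inner_basis_mulVec hH, real_inner_comm z]
  ring

lemma norm_expansion (hH : H.IsHermitian) (z : EuclideanSpace ℝ (Fin n)) :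
    z ⬝ᵥ z = ∑ i, ⟪hH.eigenvectorBasis i, z⟫ ^ 2 := by
  rw [← inner_eq_dot, ← (hH.eigenvectorBasis).sum_inner_mul_inner z z]
  refine Finset.sum_congr rfl fun i _ => ?_
  rw [real_inner_comm z]; ring

lemma quad_le_of_eigen_le (hH : H.IsHermitian) {σ : ℝ}
    (hle : ∀ i, hH.eigenvalues i ≤ σ) (z : Fin n → ℝ) :
    z ⬝ᵥ (H *ᵥ z) ≤ σ * (z ⬝ᵥ z) := by
  rw [quad_expansion hH (WithLp.toLp 2 z), norm_expansion hH (WithLp.toLp 2 z), Finset.mul_sum]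
  exact Finset.sum_le_sum fun i _ => mul_le_mul_of_nonneg_right (hle i) (sq_nonneg _)

lemma repr_eq_zero_of_eigen_ne (hH : H.IsHermitian) {σ : ℝ} {z : Fin n → ℝ}
    (hz : H *ᵥ z = σ • z) {i : Fin n} (hne : hH.eigenvalues i ≠ σ) :
    ⟪hH.eigenvectorBasis i, (WithLp.toLp 2 z : EuclideanSpace ℝ (Fin n))⟫ = 0 := by
  have h1 := inner_basis_mulVec hH (WithLp.toLp 2 z : EuclideanSpace ℝ (Fin n)) i
  rw [hz] at h1
  have h2 : ⟪hH.eigenvectorBasis i, (WithLp.toLp 2 (σ • z) : EuclideanSpace ℝ (Fin n))⟫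
      = σ * ⟪hH.eigenvectorBasis i, (WithLp.toLp 2 z : EuclideanSpace ℝ (Fin n))⟫ :=
    real_inner_smul_right _ _ _
  rw [h2] at h1
  rcases mul_eq_zero.mp (show (hH.eigenvalues i - σ) *
      ⟪hH.eigenvectorBasis i, (WithLp.toLp 2 z : EuclideanSpace ℝ (Fin n))⟫ = 0 by ring_nf; linarith [h1]) with h | h
  · exact absurd (by linarith [h] : hH.eigenvalues i = σ) hne
  · exact h

lemma exists_eigen_eq (hH : H.IsHermitian) {σ : ℝ} {z : Fin n → ℝ}
    (hz : H *ᵥ z = σ • z) (hz0 : z ≠ 0) :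
    ∃ i, hH.eigenvalues i = σ := by
  by_contra hcon
  push_neg at hcon
  have : (WithLp.toLp 2 z : EuclideanSpace ℝ (Fin n)) = 0 := by
    rw [← (hH.eigenvectorBasis).sum_repr' (WithLp.toLp 2 z : EuclideanSpace ℝ (Fin n))]
    refine Finset.sum_eq_zero fun i _ => ?_
    rw [repr_eq_zero_of_eigen_ne hH hz (hcon i), zero_smul]
  exact hz0 (congrArg WithLp.ofLp this)

lemma mem_span_singleton_eigen (hH : H.IsHermitian) {σ : ℝ} {z : Fin n → ℝ}
    (hz : H *ᵥ z = σ • z) (i₀ : Fin n) (huniq : ∀ i, hH.eigenvalues i = σ → i = i₀) :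
    (WithLp.toLp 2 z : EuclideanSpace ℝ (Fin n)) ∈
      Submodule.span ℝ ({hH.eigenvectorBasis i₀} : Set (EuclideanSpace ℝ (Fin n))) := by
  rw [← (hH.eigenvectorBasis).sum_repr' (WithLp.toLp 2 z : EuclideanSpace ℝ (Fin n))]
  refine Submodule.sum_mem _ fun i _ => ?_
  by_cases hi : hH.eigenvalues i = σ
  · rw [huniq i hi]
    exact Submodule.smul_mem _ _ (Submodule.subset_span rfl)
  · rw [repr_eq_zero_of_eigen_ne hH hz hi, zero_smul]
    exact Submodule.zero_mem _

lemma exists_eigen_gt (hH : H.IsHermitian) {σ : ℝ} {z : Fin n → ℝ}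
    (hq : σ * (z ⬝ᵥ z) < z ⬝ᵥ (H *ᵥ z)) :
    ∃ i, σ < hH.eigenvalues i := by
  by_contra hcon
  push_neg at hcon
  exact absurd (quad_le_of_eigen_le hH hcon z) (not_le.mpr hq)

end Spectral

section EDM
variable {n d : ℕ} (x : Fin n → EuclideanSpace ℝ (Fin d)) (σ : ℝ)

lemma mulVec_D (z : Fin n → ℝ) (i : Fin n) :
    ((Matrix.of fun i j => ‖x i - x j‖ ^ 2 : Matrix (Fin n) (Fin n) ℝ) *ᵥ z) i
      = (∑ j, z j) * ‖x i‖ ^ 2 + (∑ j, z j * ‖x j‖ ^ 2) - 2 * ⟪x i, ∑ j, z j • x j⟫ := by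
  simp only [Matrix.mulVec, dotProduct, Matrix.of_apply]
  rw [inner_sum]
  simp only [real_inner_smul_right]
  rw [Finset.sum_mul, Finset.mul_sum, ← Finset.sum_add_distrib, ← Finset.sum_sub_distrib]
  refine Finset.sum_congr rfl fun j _ => ?_
  rw [norm_sub_sq_real]
  ring

lemma mulVec_J (z : Fin n → ℝ) (i : Fin n) :
    ((Matrix.of fun a b => if a = b then (0:ℝ) else 1 : Matrix (Fin n) (Fin n) ℝ) *ᵥ z) i
      = (∑ j, z j) - z i := by
  simp only [Matrix.mulVec, dotProduct, Matrix.of_apply]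
  have h : ∀ j, (if i = j then (0:ℝ) else 1) * z j = z j - (if i = j then z j else 0) := by
    intro j; split <;> ring
  simp_rw [h]
  rw [Finset.sum_sub_distrib, Finset.sum_ite_eq]
  simp

lemma mulVec_H (z : Fin n → ℝ) (hsum : ∑ i, z i = 0) (hS : ∑ i, z i • x i = 0) :
    (((Matrix.of fun i j => ‖x i - x j‖ ^ 2) -
        σ • (Matrix.of fun a b => if a = b then (0:ℝ) else 1) : Matrix (Fin n) (Fin n) ℝ) *ᵥ z)
      = (∑ j, z j * ‖x j‖ ^ 2) • (fun _ => (1:ℝ)) + σ • z := by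
  funext i
  rw [Matrix.sub_mulVec]
  simp only [Pi.sub_apply, Pi.add_apply, Pi.smul_apply, smul_eq_mul]
  rw [Matrix.smul_mulVec]
  simp only [Pi.smul_apply, smul_eq_mul]
  rw [mulVec_D, mulVec_J, hsum, hS]
  simp

lemma quad_bound (z : Fin n → ℝ) (hsum : ∑ i, z i = 0) :
    z ⬝ᵥ (((Matrix.of fun i j => ‖x i - x j‖ ^ 2) -
        σ • (Matrix.of fun a b => if a = b then (0:ℝ) else 1) : Matrix (Fin n) (Fin n) ℝ) *ᵥ z)
      ≤ σ * (z ⬝ᵥ z) := by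
  have hinner : ∑ i, z i * ⟪x i, ∑ j, z j • x j⟫ = ⟪∑ j, z j • x j, ∑ j, z j • x j⟫ := by
    rw [sum_inner]
    exact Finset.sum_congr rfl fun i _ => (real_inner_smul_left _ _ _).symm
  have hDz : z ⬝ᵥ ((Matrix.of fun i j => ‖x i - x j‖ ^ 2 : Matrix (Fin n) (Fin n) ℝ) *ᵥ z)
      = -2 * ⟪∑ j, z j • x j, ∑ j, z j • x j⟫ := by
    calc z ⬝ᵥ ((Matrix.of fun i j => ‖x i - x j‖ ^ 2 : Matrix (Fin n) (Fin n) ℝ) *ᵥ z)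
        = ∑ i, (z i * (∑ j, z j * ‖x j‖ ^ 2) - 2 * (z i * ⟪x i, ∑ j, z j • x j⟫)) := by
          simp only [dotProduct]
          simp_rw [mulVec_D x z, hsum]
          exact Finset.sum_congr rfl fun i _ => by ring
      _ = (∑ i, z i) * (∑ j, z j * ‖x j‖ ^ 2) - 2 * ∑ i, z i * ⟪x i, ∑ j, z j • x j⟫ := by
          rw [Finset.sum_sub_distrib, ← Finset.sum_mul, ← Finset.mul_sum]
      _ = -2 * ⟪∑ j, z j • x j, ∑ j, z j • x j⟫ := by rw [hsum, hinner]; ring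
  have hJz : z ⬝ᵥ (((Matrix.of fun a b => if a = b then (0:ℝ) else 1) :
      Matrix (Fin n) (Fin n) ℝ) *ᵥ z) = -(z ⬝ᵥ z) := by
    rw [show -(z ⬝ᵥ z) = ∑ i, -(z i * z i) by
      simp [dotProduct, ← Finset.sum_neg_distrib]]
    simp only [dotProduct]
    simp_rw [mulVec_J z, hsum]
    exact Finset.sum_congr rfl fun i _ => by ring
  rw [Matrix.sub_mulVec, dotProduct_sub, hDz, Matrix.smul_mulVec,
    dotProduct_smul, hJz, smul_eq_mul]
  have := real_inner_self_nonneg (x := ∑ j, z j • x j)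
  nlinarith
end EDM

noncomputable def edmL1 {n d : ℕ} (x : Fin n → EuclideanSpace ℝ (Fin d)) :
    EuclideanSpace ℝ (Fin n) →ₗ[ℝ] ℝ × EuclideanSpace ℝ (Fin d) where
  toFun z := (∑ i, z i, ∑ i, z i • x i)
  map_add' a b := by
    ext <;> simp [Finset.sum_add_distrib, add_smul, PiLp.add_apply]
  map_smul' c a := by
    ext <;> simp [Finset.mul_sum, Finset.smul_sum, smul_smul, PiLp.smul_apply]

noncomputable def edmL0 {n d : ℕ} (x : Fin n → EuclideanSpace ℝ (Fin d)) :
    EuclideanSpace ℝ (Fin n) →ₗ[ℝ] (ℝ × ℝ) × EuclideanSpace ℝ (Fin d) where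
  toFun z := ((∑ i, z i, ∑ i, z i * ‖x i‖ ^ 2), ∑ i, z i • x i)
  map_add' a b := by
    ext <;> simp [Finset.sum_add_distrib, add_smul, add_mul, PiLp.add_apply]
  map_smul' c a := by
    ext <;> simp [Finset.mul_sum, Finset.smul_sum, smul_smul, mul_assoc, PiLp.smul_apply]

lemma ker_finrank_ge {n : ℕ} {W : Type*} [NormedAddCommGroup W] [NormedSpace ℝ W]
    [FiniteDimensional ℝ W] (f : EuclideanSpace ℝ (Fin n) →ₗ[ℝ] W) :
    n - finrank ℝ W ≤ finrank ℝ (LinearMap.ker f) := by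
  have h := LinearMap.finrank_range_add_finrank_ker f
  rw [finrank_euclideanSpace, Fintype.card_fin] at h
  have h2 : finrank ℝ (LinearMap.range f) ≤ finrank ℝ W := Submodule.finrank_le _
  omega

set_option maxHeartbeats 2000000 in
lemma edm_key {n d : ℕ} (hn : d + 2 < n) (x : Fin n → EuclideanSpace ℝ (Fin d)) (σ : ℝ)
    (hH : ((Matrix.of fun i j => ‖x i - x j‖ ^ 2) -
        σ • (Matrix.of fun a b => if a = b then (0:ℝ) else 1) :
        Matrix (Fin n) (Fin n) ℝ).IsHermitian) :
    (∃ i j : Fin n, i ≠ j ∧ σ ≤ hH.eigenvalues i ∧ σ ≤ hH.eigenvalues j) ∧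
    (∀ i j : Fin n, i ≠ j → σ < hH.eigenvalues i → σ < hH.eigenvalues j → False) := by
  classical
  set H : Matrix (Fin n) (Fin n) ℝ := (Matrix.of fun i j => ‖x i - x j‖ ^ 2) -
      σ • (Matrix.of fun a b => if a = b then (0:ℝ) else 1) with hHdef
  have hon := hH.eigenvectorBasis.orthonormal
  have hb : ∀ k l, ⟪hH.eigenvectorBasis k, hH.eigenvectorBasis l⟫ = if k = l then (1:ℝ) else 0 :=
    fun k l => orthonormal_iff_ite.mp hon k l
  have K2 : ∀ i j : Fin n, i ≠ j → σ < hH.eigenvalues i → σ < hH.eigenvalues j → False := by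
    intro i j hij hi hj
    set b := hH.eigenvectorBasis with hbdef
    set p : ℝ := ∑ k, b i k
    set q : ℝ := ∑ k, b j k
    obtain ⟨a, β, hab, habsum⟩ : ∃ a β : ℝ, ¬(a = 0 ∧ β = 0) ∧ a * p + β * q = 0 := by
      by_cases hpq : p = 0 ∧ q = 0
      · exact ⟨1, 0, by simp, by simp [hpq.1, hpq.2]⟩
      · exact ⟨q, -p, fun ⟨h1, h2⟩ => hpq ⟨by simpa using h2, h1⟩, by ring⟩
    set z : EuclideanSpace ℝ (Fin n) := a • b i + β • b j with hzdef
    have hsum : ∑ k, z k = 0 := by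
      simp only [hzdef, PiLp.add_apply, PiLp.smul_apply, smul_eq_mul]
      rw [Finset.sum_add_distrib, ← Finset.mul_sum, ← Finset.mul_sum]
      exact habsum
    have hz1 : H *ᵥ (z : Fin n → ℝ) = (a * hH.eigenvalues i) • (b i : Fin n → ℝ)
        + (β * hH.eigenvalues j) • (b j : Fin n → ℝ) := by
      have e1 : H *ᵥ (b i : Fin n → ℝ) = hH.eigenvalues i • (b i : Fin n → ℝ) :=
        hH.mulVec_eigenvectorBasis i
      have e2 : H *ᵥ (b j : Fin n → ℝ) = hH.eigenvalues j • (b j : Fin n → ℝ) :=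
        hH.mulVec_eigenvectorBasis j
      rw [show (z : Fin n → ℝ) = a • (b i : Fin n → ℝ) + β • (b j : Fin n → ℝ) from rfl,
        Matrix.mulVec_add, Matrix.mulVec_smul, Matrix.mulVec_smul, e1, e2]
      funext k
      simp [smul_smul]
    have hquadz : z ⬝ᵥ (H *ᵥ z) = a ^ 2 * hH.eigenvalues i + β ^ 2 * hH.eigenvalues j := by
      rw [← inner_eq_dot z (WithLp.toLp 2 (H *ᵥ z) : EuclideanSpace ℝ (Fin n))]
      rw [show (WithLp.toLp 2 (H *ᵥ z) : EuclideanSpace ℝ (Fin n))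
          = ((a * hH.eigenvalues i) • (b i : EuclideanSpace ℝ (Fin n))
            + (β * hH.eigenvalues j) • (b j : EuclideanSpace ℝ (Fin n))) from congrArg (WithLp.toLp 2) hz1]
      simp only [hzdef, inner_add_left, inner_add_right, real_inner_smul_left,
        real_inner_smul_right, hb, if_pos rfl, if_true, if_neg hij, if_neg (Ne.symm hij)]
      ring
    have hzz : z ⬝ᵥ z = a ^ 2 + β ^ 2 := by
      rw [← inner_eq_dot z z]
      simp only [hzdef, inner_add_left, inner_add_right, real_inner_smul_left,
        real_inner_smul_right, hb, if_pos rfl, if_true, if_neg hij, if_neg (Ne.symm hij)]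
      ring
    have hq := quad_bound x σ z hsum
    rw [← hHdef] at hq
    have hpos : 0 < a ^ 2 + β ^ 2 := by
      rcases not_and_or.mp hab with h | h
      · have : 0 < a ^ 2 := by positivity
        nlinarith [sq_nonneg β]
      · have : 0 < β ^ 2 := by positivity
        nlinarith [sq_nonneg a]
    rw [hquadz, hzz] at hq
    have h1 : 0 ≤ β ^ 2 * (hH.eigenvalues j - σ) := mul_nonneg (sq_nonneg β) (by linarith)
    have h1' : 0 ≤ a ^ 2 * (hH.eigenvalues i - σ) := mul_nonneg (sq_nonneg a) (by linarith)
    rcases not_and_or.mp hab with h | h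
    · have hA : 0 < a ^ 2 := by positivity
      nlinarith [mul_pos hA (show 0 < hH.eigenvalues i - σ by linarith)]
    · have hB : 0 < β ^ 2 := by positivity
      nlinarith [mul_pos hB (show 0 < hH.eigenvalues j - σ by linarith)]
  have hker0 : 1 ≤ finrank ℝ (LinearMap.ker (edmL0 x)) := by
    have h1 := ker_finrank_ge (edmL0 x)
    have hw : finrank ℝ ((ℝ × ℝ) × EuclideanSpace ℝ (Fin d)) = 2 + d := by
      simp [Module.finrank_prod, finrank_euclideanSpace, Fintype.card_fin]
    rw [hw] at h1
    omega
  obtain ⟨z₀, hz₀mem, hz₀ne⟩ := Submodule.exists_mem_ne_zero_of_ne_bot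
    (p := LinearMap.ker (edmL0 x)) (by
      intro h
      rw [h, finrank_bot] at hker0
      omega)
  obtain ⟨⟨h0sum, h0v⟩, h0S⟩ : ((∑ i, z₀ i = 0) ∧ (∑ i, z₀ i * ‖x i‖ ^ 2 = 0)) ∧
      (∑ i, z₀ i • x i = 0) := by
    have := LinearMap.mem_ker.mp hz₀mem
    simpa [edmL0, Prod.ext_iff] using this
  have heig0 : H *ᵥ (z₀ : Fin n → ℝ) = σ • (z₀ : Fin n → ℝ) := by
    rw [hHdef, mulVec_H x σ z₀ h0sum h0S, h0v, zero_smul, zero_add]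
  obtain ⟨j₀, hj₀⟩ := exists_eigen_eq hH heig0 (by
    intro h
    exact hz₀ne (by ext k; exact congrFun h k))
  refine ⟨?_, K2⟩
  by_cases hex : ∃ z : Fin n → ℝ, (∑ i, z i = 0) ∧ (∑ i, z i • x i = 0) ∧
      (∑ i, z i * ‖x i‖ ^ 2) ≠ 0
  · obtain ⟨z, hzs, hzS, hzc⟩ := hex
    set c : ℝ := ∑ i, z i * ‖x i‖ ^ 2 with hcdef
    set o : Fin n → ℝ := fun _ => 1 with hodef
    have hz1 : H *ᵥ z = c • o + σ • z := by
      rw [hHdef]; exact mulVec_H x σ z hzs hzS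
    have hnn : (0:ℝ) < n := by
      have : 0 < n := by omega
      exact_mod_cast this
    have hc2 : 0 < c ^ 2 := by positivity
    have hno : o ⬝ᵥ o = (n : ℝ) := by simp [dotProduct, hodef]
    have hzo : z ⬝ᵥ o = 0 := by simpa [dotProduct, hodef] using hzs
    have hoz : o ⬝ᵥ z = 0 := by simpa [dotProduct, hodef] using hzs
    have hzHz : z ⬝ᵥ (H *ᵥ z) = σ * (z ⬝ᵥ z) := by
      rw [hz1, dotProduct_add, dotProduct_smul, dotProduct_smul, hzo]
      simp
    have hoHz : o ⬝ᵥ (H *ᵥ z) = c * n := by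
      rw [hz1, dotProduct_add, dotProduct_smul, dotProduct_smul, hno, hoz]
      simp
    have hzHo : z ⬝ᵥ (H *ᵥ o) = c * n := by
      rw [dot_mulVec_symm hH, hz1, add_dotProduct, smul_dotProduct,
        smul_dotProduct, hno, hzo]
      simp
    set Q : ℝ := o ⬝ᵥ (H *ᵥ o) with hQdef
    set ε : ℝ := (n : ℝ) / (|Q - σ * n| + 1) with hεdef
    have habs : 0 ≤ |Q - σ * n| := abs_nonneg _
    have hε : 0 < ε := by positivity
    have hεQ : ε * |Q - σ * n| < n := by
      rw [hεdef, div_mul_eq_mul_div, div_lt_iff₀ (by positivity)]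
      linarith
    set t : ℝ := ε * c with htdef
    set w : Fin n → ℝ := z + t • o with hwdef
    have hdotw : w ⬝ᵥ (H *ᵥ w) = σ * (z ⬝ᵥ z) + 2 * t * (c * n) + t ^ 2 * Q := by
      rw [hwdef, Matrix.mulVec_add, Matrix.mulVec_smul]
      simp only [add_dotProduct, smul_dotProduct, dotProduct_add,
        dotProduct_smul, smul_eq_mul, hzHz, hzHo, hoHz, ← hQdef]
      ring
    have hww : w ⬝ᵥ w = z ⬝ᵥ z + t ^ 2 * n := by
      rw [hwdef]
      simp only [add_dotProduct, smul_dotProduct, dotProduct_add,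
        dotProduct_smul, smul_eq_mul, hzo, hoz, hno]
      ring
    clear_value c Q ε t w
    have hstrict : σ * (w ⬝ᵥ w) < w ⬝ᵥ (H *ᵥ w) := by
      rw [hdotw, hww]
      have hkey : 0 < 2 * t * (c * n) + t ^ 2 * (Q - σ * n) := by
        have h1 : t ^ 2 * (Q - σ * n) ≥ -(t ^ 2 * |Q - σ * n|) := by
          have := neg_abs_le (Q - σ * n)
          nlinarith [sq_nonneg t]
        have h2 : t ^ 2 * |Q - σ * n| = ε * c ^ 2 * (ε * |Q - σ * n|) := by
          rw [htdef]; ring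
        have h3 : ε * c ^ 2 * (ε * |Q - σ * n|) < ε * c ^ 2 * n :=
          mul_lt_mul_of_pos_left hεQ (by positivity)
        have h4 : 2 * t * (c * n) = 2 * (ε * c ^ 2 * n) := by rw [htdef]; ring
        nlinarith
      nlinarith
    obtain ⟨i, hi⟩ := exists_eigen_gt hH hstrict
    refine ⟨i, j₀, ?_, le_of_lt hi, le_of_eq hj₀.symm⟩
    intro h
    rw [h, hj₀] at hi
    exact lt_irrefl σ hi
  · push_neg at hex
    by_contra hcon
    push_neg at hcon
    have huniq : ∀ i, hH.eigenvalues i = σ → i = j₀ := by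
      intro i hi
      by_contra hne
      exact absurd (le_of_eq hj₀.symm) (not_le.mpr (hcon i j₀ hne (le_of_eq hi.symm)))
    have hspan : LinearMap.ker (edmL1 x) ≤ Submodule.span ℝ
        ({hH.eigenvectorBasis j₀} : Set (EuclideanSpace ℝ (Fin n))) := by
      intro z hz
      obtain ⟨hzs, hzS⟩ : (∑ i, z i = 0) ∧ (∑ i, z i • x i = 0) := by
        have := LinearMap.mem_ker.mp hz
        simpa [edmL1, Prod.ext_iff] using this
      have hzc := hex z hzs hzS
      have heig : H *ᵥ (z : Fin n → ℝ) = σ • (z : Fin n → ℝ) := by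
        rw [hHdef, mulVec_H x σ z hzs hzS, hzc, zero_smul, zero_add]
      exact mem_span_singleton_eigen hH heig j₀ huniq
    have h2 : 2 ≤ finrank ℝ (LinearMap.ker (edmL1 x)) := by
      have h1 := ker_finrank_ge (edmL1 x)
      have hw : finrank ℝ (ℝ × EuclideanSpace ℝ (Fin d)) = 1 + d := by
        simp [Module.finrank_prod, finrank_euclideanSpace, Fintype.card_fin]
      rw [hw] at h1
      omega
    have hle := Submodule.finrank_mono hspan
    have hsing : finrank ℝ (Submodule.span ℝ
        ({hH.eigenvectorBasis j₀} : Set (EuclideanSpace ℝ (Fin n)))) = 1 :=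
      finrank_span_singleton (hon.ne_zero j₀)
    omega

lemma secondLargest_eq_of {n : ℕ} (f : Fin n → ℝ) (σ : ℝ)
    (K1 : ∃ i j : Fin n, i ≠ j ∧ σ ≤ f i ∧ σ ≤ f j)
    (K2 : ∀ i j : Fin n, i ≠ j → σ < f i → σ < f j → False) :
    secondLargest f = σ := by
  have hub : ∀ μ ∈ {μ : ℝ | ∃ i j : Fin n, i ≠ j ∧ μ ≤ f i ∧ μ ≤ f j}, μ ≤ σ := by
    rintro μ ⟨i, j, hij, h1, h2⟩
    by_contra h
    push_neg at h
    exact K2 i j hij (lt_of_lt_of_le h h1) (lt_of_lt_of_le h h2)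
  have hmem : σ ∈ {μ : ℝ | ∃ i j : Fin n, i ≠ j ∧ μ ≤ f i ∧ μ ≤ f j} := K1
  exact le_antisymm (csSup_le ⟨σ, hmem⟩ hub) (le_csSup ⟨σ, hub⟩ hmem)

end EDMAux

/-- For a Euclidean distance matrix `D` of `n` points in `ℝ^d` with `n > d + 2` and any
`σ > 0`, the second largest eigenvalue of `D - σ(11ᵀ - I)` equals `σ`.  Consequently
`D = C + λ₂(C) J` where `C = D - σ_D J` is the component of `D` orthogonal to `J`. -/
theorem edm_recovery_from_centered (n d : ℕ) (hn : d + 2 < n)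
    (x : Fin n → EuclideanSpace ℝ (Fin d))
    (D J C : Matrix (Fin n) (Fin n) ℝ)
    (hD : D = Matrix.of fun i j => ‖x i - x j‖ ^ 2)
    (hJ : J = (Matrix.of fun a b => if a = b then (0 : ℝ) else 1))
    (hC : C = D - (Matrix.trace (D * J) / ((n : ℝ) * ((n : ℝ) - 1))) • J)
    (σ : ℝ) (hσ : 0 < σ) :
    (∀ hH : (D - σ • J).IsHermitian, secondLargest hH.eigenvalues = σ) ∧
    (∀ hHC : C.IsHermitian, D = C + secondLargest hHC.eigenvalues • J) := by
  subst hD hJ hC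
  constructor
  · intro hH
    obtain ⟨K1, K2⟩ := edm_key hn x σ hH
    exact secondLargest_eq_of _ σ K1 K2
  · intro hHC
    obtain ⟨K1, K2⟩ := edm_key hn x _ hHC
    rw [secondLargest_eq_of _ _ K1 K2]
    exact (sub_add_cancel _ _).symm
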